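/- arXiv:2110.09078 — 5 statements merged into one kernel-verified Lean document; each statement's English description precedes it below -/
import Mathlib

section
/- Let k, α > 0 and let L be the Laplacian of an undirected weighted graph on N vertices (so L is symmetric and L𝟙_N = 0), with 𝑳 = L ⊗ I_{Nn}. Assume each J_i is convex in x_i. Then x* ∈ ℝ^{Nn} is a Nash equilibrium of the game if and only if the point (x, v, 𝒙) = (x*, 0_{Nn}, 𝟙_N ⊗ x*) is an equilibrium of the closed-loop dynamics ẋ = v, v̇ ∈ −kv − 𝐅(𝒙) − (α/k)R𝑳𝒙, S𝒙̇ = −αS𝑳𝒙; that is: v* = 0, 0 ∈ −k·0 − 𝐅(𝟙_N ⊗ x*) − (α/k)R𝑳(𝟙_N ⊗ x*), and 0 = −αS𝑳(𝟙_N ⊗ x*). -/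
open scoped RealInnerProductSpace
open Filter Set

noncomputable section

/-- Strategy space ℝⁿ of a single agent. -/
abbrev Strat (n : ℕ) := EuclideanSpace ℝ (Fin n)

/-- Space ℝ^{Nn} of strategy profiles (with the Euclidean norm). -/
abbrev Profile (N n : ℕ) := PiLp 2 (fun _ : Fin N => Strat n)

/-- Space ℝ^{N²n} of stacked estimates (with the Euclidean norm). -/
abbrev Stacked (N n : ℕ) := PiLp 2 (fun _ : Fin N => Profile N n)

/-- Subdifferential of a (convex) function `f` at `x`:
all `g` with `f y ≥ f x + ⟨g, y - x⟩` for every `y`. -/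
def subdiff {n : ℕ} (f : Strat n → ℝ) (x : Strat n) : Set (Strat n) :=
  {g | ∀ y, f x + ⟪g, y - x⟫ ≤ f y}

/-- Partial subdifferential `∂_{x_i} J_i` at the profile `x`: the subdifferential at `x i`
of the map `y ↦ J i (x with i-th block replaced by y)`. -/
def partialSubdiff {N n : ℕ} (J : Fin N → Profile N n → ℝ) (i : Fin N)
    (x : Profile N n) : Set (Strat n) :=
  subdiff (fun y => J i (WithLp.toLp 2 (Function.update x i y))) (x i)

/-- Nash equilibrium of the game with costs `J`. -/
def IsNashEq {N n : ℕ} (J : Fin N → Profile N n → ℝ) (x : Profile N n) : Prop :=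
  ∀ (i : Fin N) (y : Strat n), J i x ≤ J i (WithLp.toLp 2 (Function.update x i y))

/-- Pseudo-gradient `F(x) = ∏ᵢ ∂_{x_i}J_i(x)`. -/
def pseudoGrad {N n : ℕ} (J : Fin N → Profile N n → ℝ) (x : Profile N n) :
    Set (Profile N n) :=
  {d | ∀ i, d i ∈ partialSubdiff J i x}

/-- Augmented pseudo-gradient `𝐅(𝒙) = ∏ᵢ ∂_{x_i}J_i(xᵢ, 𝒙ⁱ₋ᵢ)`, where `X i` is agent `i`'s
estimate of the full profile. -/
def augPseudoGrad {N n : ℕ} (J : Fin N → Profile N n → ℝ) (X : Stacked N n) :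
    Set (Profile N n) :=
  {d | ∀ i, d i ∈ partialSubdiff J i (X i)}

/-- The stacked vector `𝟙_N ⊗ y`. -/
def constStack {N n : ℕ} (y : Profile N n) : Stacked N n := WithLp.toLp 2 (fun _ => y)

/-- `𝑳Z` where `𝑳 = L ⊗ I_{Nn}`. -/
def lapApply {N n : ℕ} (L : Matrix (Fin N) (Fin N) ℝ) (Z : Stacked N n) : Stacked N n :=
  WithLp.toLp 2 (fun i => ∑ j, L i j • Z j)

/-- `RZ`: the block-diagonal selection matrix `R = blkdiag(R₁,…,R_N)` applied to `Z`,
extracting the `i`-th `n`-block of `Zⁱ`. -/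
def Rsel {N n : ℕ} (Z : Stacked N n) : Profile N n := WithLp.toLp 2 (fun i => Z i i)

/-- `x*` is a Nash equilibrium iff `(x*, 0, 𝟙_N ⊗ x*)` is an equilibrium of
the closed-loop dynamics `ẋ = v`, `v̇ ∈ -kv - 𝐅(𝒙) - (α/k)R𝑳𝒙`, `S𝒙̇ = -αS𝑳𝒙`;
i.e. `v* = 0`, `0 ∈ -k•0 - 𝐅(𝟙_N ⊗ x*) - (α/k)R𝑳(𝟙_N ⊗ x*)` and
`0 = -αS𝑳(𝟙_N ⊗ x*)` (the latter blockwise, for all off-`i` blocks). -/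
theorem stmt2 (N n : ℕ) (hN : 2 ≤ N) (J : Fin N → Profile N n → ℝ)
    (hconv : ∀ (i : Fin N) (x : Profile N n),
      ConvexOn ℝ Set.univ (fun y => J i (WithLp.toLp 2 (Function.update x i y))))
    (k α : ℝ) (hk : 0 < k) (hα : 0 < α)
    (L : Matrix (Fin N) (Fin N) ℝ) (hLsymm : ∀ i j, L i j = L j i)
    (hLrow : ∀ i, ∑ j, L i j = 0)
    (xs : Profile N n) :
    IsNashEq J xs ↔
      ((0 : Profile N n) = (0 : Profile N n) ∧   -- v* = 0 at the claimed equilibrium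
      (∃ d ∈ augPseudoGrad J (constStack xs),
        (0 : Profile N n) =
          -k • (0 : Profile N n) - d - (α / k) • Rsel (lapApply L (constStack xs))) ∧
      (∀ (i m : Fin N), m ≠ i →
        -α • (lapApply L (constStack xs) i m) = (0 : Strat n))) := by
  have hlap : ∀ i, lapApply L (constStack xs) i = 0 := by
    intro i
    simp only [lapApply, constStack, WithLp.ofLp_toLp, ← Finset.sum_smul, hLrow, zero_smul]
  have hzero : ∀ i, (0 : Strat n) ∈ partialSubdiff J i xs ↔
      ∀ y, J i xs ≤ J i (WithLp.toLp 2 (Function.update xs i y)) := by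
    intro i
    constructor
    · intro h y
      have := h y
      simpa [Function.update_eq_self] using this
    · intro h y
      simpa [Function.update_eq_self] using h y
  constructor
  · intro hnash
    refine ⟨rfl, ⟨0, fun i => (hzero i).2 (hnash i), ?_⟩, ?_⟩
    · refine PiLp.ext fun i => ?_
      simp [hlap, Rsel]
    · intro i m _
      have := (by simp [hlap i] : lapApply L (constStack xs) i m = 0)
      simp [this]
  · rintro ⟨-, ⟨d, hd, heq⟩, -⟩
    have hd0 : d = 0 := by
      have : (0 : Profile N n) = -d := by
        rw [heq]; refine PiLp.ext fun i => ?_; simp [hlap, Rsel]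
      simpa [neg_eq_iff_eq_neg] using this.symm
    intro i y
    exact (hzero i).1 (by simpa [hd0, constStack] using hd i) y
end
end

section
/- Let θ, w, λ₂, μ, k, α be positive reals. Let x̃, ṽ, d, d', d* ∈ ℝ^{Nn} and 𝒙̃, 𝒙̃ᶜ, 𝒙̃ᵒ ∈ ℝ^{N²n} with 𝒙̃ = 𝒙̃ᶜ + 𝒙̃ᵒ and ⟨𝒙̃ᶜ, 𝒙̃ᵒ⟩ = 0. Let 𝑳 be a symmetric linear operator on ℝ^{N²n} and M : ℝ^{N²n} → ℝ^{Nn} a linear map, and assume: 𝑳𝒙̃ᶜ = 0; M𝒙̃ᶜ = 0; ⟨𝒙̃ᵒ, 𝑳𝒙̃ᵒ⟩ ≥ λ₂‖𝒙̃ᵒ‖²; ‖Mz‖ ≤ μ‖z‖ for all z; ‖d − d'‖ ≤ θ‖𝒙̃ᵒ‖; ‖d' − d*‖ ≤ θ‖x̃‖; and ⟨x̃, d' − d*⟩ ≥ w‖x̃‖². Then −k‖ṽ‖² − 2⟨ṽ, d − d*⟩ − (2α/k)⟨ṽ, M𝒙̃⟩ − k⟨x̃, d − d*⟩ − α⟨𝒙̃,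 𝑳𝒙̃⟩ ≤ −(kw − 2θ)‖x̃‖² − (k − 2θ − αμ/k)‖ṽ‖² − (αλ₂ − θ − αμ/k − k²θ/4)‖𝒙̃ᵒ‖². -/
set_option maxHeartbeats 800000


open scoped RealInnerProductSpace

/-- the key Lie-derivative estimate for the continuous-time rule. -/
theorem stmt7 {E F : Type*} [NormedAddCommGroup E] [InnerProductSpace ℝ E]
    [NormedAddCommGroup F] [InnerProductSpace ℝ F]
    (θ w lam2 μ k α : ℝ)
    (hθ : 0 < θ) (hw : 0 < w) (hlam : 0 < lam2) (hμ : 0 < μ) (hk : 0 < k) (hα : 0 < α)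
    (xt vt d d' ds : E) (Xt Xc Xo : F)
    (hdecomp : Xt = Xc + Xo) (horth : ⟪Xc, Xo⟫ = 0)
    (Lop : F →ₗ[ℝ] F) (hLsym : ∀ u v : F, ⟪Lop u, v⟫ = ⟪u, Lop v⟫)
    (M : F →ₗ[ℝ] E)
    (hLc : Lop Xc = 0) (hMc : M Xc = 0)
    (hLo : lam2 * ‖Xo‖ ^ 2 ≤ ⟪Xo, Lop Xo⟫)
    (hM : ∀ z : F, ‖M z‖ ≤ μ * ‖z‖)
    (hdd' : ‖d - d'‖ ≤ θ * ‖Xo‖) (hd's : ‖d' - ds‖ ≤ θ * ‖xt‖)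
    (hmono : w * ‖xt‖ ^ 2 ≤ ⟪xt, d' - ds⟫) :
    -k * ‖vt‖ ^ 2 - 2 * ⟪vt, d - ds⟫ - (2 * α / k) * ⟪vt, M Xt⟫
        - k * ⟪xt, d - ds⟫ - α * ⟪Xt, Lop Xt⟫
      ≤ -(k * w - 2 * θ) * ‖xt‖ ^ 2 - (k - 2 * θ - α * μ / k) * ‖vt‖ ^ 2
        - (α * lam2 - θ - α * μ / k - k ^ 2 * θ / 4) * ‖Xo‖ ^ 2 := by
  set a := ‖xt‖ with ha
  set b := ‖vt‖ with hb
  set c := ‖Xo‖ with hc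
  have ha0 : 0 ≤ a := norm_nonneg _
  have hb0 : 0 ≤ b := norm_nonneg _
  have hc0 : 0 ≤ c := norm_nonneg _
  -- M Xt = M Xo
  have hMX : M Xt = M Xo := by rw [hdecomp, map_add, hMc, zero_add]
  -- ⟪Xt, L Xt⟫ = ⟪Xo, L Xo⟫
  have hLX : ⟪Xt, Lop Xt⟫ = ⟪Xo, Lop Xo⟫ := by
    have h1 : ⟪Xc, Lop Xo⟫ = 0 := by
      rw [← hLsym, hLc, inner_zero_left]
    rw [hdecomp, map_add, hLc, zero_add, inner_add_left, h1, zero_add]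
  -- split d - ds
  have hsplitv : ⟪vt, d - ds⟫ = ⟪vt, d - d'⟫ + ⟪vt, d' - ds⟫ := by
    rw [← inner_add_right]; congr 1; abel
  have hsplitx : ⟪xt, d - ds⟫ = ⟪xt, d - d'⟫ + ⟪xt, d' - ds⟫ := by
    rw [← inner_add_right]; congr 1; abel
  -- Cauchy–Schwarz bounds
  have cs1 : -(b * (θ * c)) ≤ ⟪vt, d - d'⟫ := by
    have h1 := abs_real_inner_le_norm vt (d - d')
    have h2 : b * ‖d - d'‖ ≤ b * (θ * c) := mul_le_mul_of_nonneg_left hdd' hb0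
    linarith [neg_abs_le ⟪vt, d - d'⟫]
  have cs2 : -(b * (θ * a)) ≤ ⟪vt, d' - ds⟫ := by
    have h1 := abs_real_inner_le_norm vt (d' - ds)
    have h2 : b * ‖d' - ds‖ ≤ b * (θ * a) := mul_le_mul_of_nonneg_left hd's hb0
    linarith [neg_abs_le ⟪vt, d' - ds⟫]
  have cs3 : -(a * (θ * c)) ≤ ⟪xt, d - d'⟫ := by
    have h1 := abs_real_inner_le_norm xt (d - d')
    have h2 : a * ‖d - d'‖ ≤ a * (θ * c) := mul_le_mul_of_nonneg_left hdd' ha0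
    linarith [neg_abs_le ⟪xt, d - d'⟫]
  have cs4 : -(b * (μ * c)) ≤ ⟪vt, M Xo⟫ := by
    have h1 := abs_real_inner_le_norm vt (M Xo)
    have h2 : b * ‖M Xo‖ ≤ b * (μ * c) := mul_le_mul_of_nonneg_left (hM Xo) hb0
    linarith [neg_abs_le ⟪vt, M Xo⟫]
  rw [hMX, hLX, hsplitv, hsplitx]
  have hq : 0 < α * μ / k := by positivity
  have h2ak : 0 < 2 * α / k := by positivity
  have key : 2 * α / k * (b * (μ * c)) = 2 * (α * μ / k) * (b * c) := by
    field_simp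
  nlinarith [mul_le_mul_of_nonneg_left hmono (by linarith : (0:ℝ) ≤ k),
    mul_le_mul_of_nonneg_left cs4 h2ak.le,
    mul_nonneg hθ.le (sq_nonneg (a - b)),
    mul_nonneg hθ.le (sq_nonneg (b - c)),
    mul_nonneg hq.le (sq_nonneg (b - c)),
    mul_nonneg hθ.le (sq_nonneg (a - k * c / 2)),
    mul_le_mul_of_nonneg_left hLo hα.le]
end

section
/- Let θ, w, λ₂, μ, ν, k, α be positive reals. Let x̃, ṽ, d, d', d* ∈ ℝ^{Nn}, let 𝒙̃, 𝒙̃ᶜ, 𝒙̃ᵒ, e ∈ ℝ^{N²n} with 𝒙̃ = 𝒙̃ᶜ + 𝒙̃ᵒ and ⟨𝒙̃ᶜ, 𝒙̃ᵒ⟩ = 0, let 𝑳 be a symmetric linear operator on ℝ^{N²n} and M : ℝ^{N²n} → ℝ^{Nn} linear, and assume: 𝑳𝒙̃ᶜ = 0; M𝒙̃ᶜ = 0; ⟨𝒙̃ᵒ, 𝑳𝒙̃ᵒ⟩ ≥ λ₂‖𝒙̃ᵒ‖²; ‖Mz‖ ≤ μ‖z‖ and ‖𝑳z‖ ≤ ν‖z‖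 for all z; ‖d − d'‖ ≤ θ‖𝒙̃ᵒ‖; ‖d' − d*‖ ≤ θ‖x̃‖; ⟨x̃, d' − d*⟩ ≥ w‖x̃‖². Then ζ̄ := −k‖ṽ‖² − 2⟨ṽ, d − d*⟩ − (2α/k)⟨ṽ, M(𝒙̃ + e)⟩ − k⟨x̃, d − d*⟩ − α⟨𝒙̃, 𝑳(𝒙̃ + e)⟩ satisfies ζ̄ ≤ −(kw − 2θ)‖x̃‖² − (k − 2θ − 2αμ/k)‖ṽ‖² − (αλ₂ − θ − αμ/k − αν/(2k) − k²θ/4)‖𝒙̃ᵒ‖² + (αμ/k + αkν/2)‖e‖². In particular, if (αλ₂ − θ)k > αμ + k³θ/4 + αν/2 and ‖e‖² ≤ ξ²‖𝒙̃ᵒ‖² with ξ² = ((αλ₂ − θ)k − αμ − k³θ/4 − αν/2)/(αμ + ανk²/2), then ζ̄ ≤ −(kw − 2θ)‖x̃‖² − (k − 2θ − 2αμ/k)‖ṽ‖². -/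
open scoped RealInnerProductSpace
set_option maxHeartbeats 1000000

lemma inner_ge_neg_bound {E : Type*} [NormedAddCommGroup E] [InnerProductSpace ℝ E]
    (x y : E) (B : ℝ) (hB : ‖y‖ ≤ B) : -(‖x‖ * B) ≤ ⟪x, y⟫ := by
  have h1 := abs_real_inner_le_norm x y
  have h2 := neg_abs_le ⟪x, y⟫
  have h3 : ‖x‖ * ‖y‖ ≤ ‖x‖ * B := mul_le_mul_of_nonneg_left hB (norm_nonneg x)
  linarith

/-- the key Lie-derivative estimate for the rule under discrete-time
communication, together with its consequence under the sampling-error bound. -/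
theorem stmt8 {E F : Type*} [NormedAddCommGroup E] [InnerProductSpace ℝ E]
    [NormedAddCommGroup F] [InnerProductSpace ℝ F]
    (θ w lam2 μ ν k α : ℝ)
    (hθ : 0 < θ) (hw : 0 < w) (hlam : 0 < lam2) (hμ : 0 < μ) (hν : 0 < ν)
    (hk : 0 < k) (hα : 0 < α)
    (xt vt d d' ds : E) (Xt Xc Xo e : F)
    (hdecomp : Xt = Xc + Xo) (horth : ⟪Xc, Xo⟫ = 0)
    (Lop : F →ₗ[ℝ] F) (hLsym : ∀ u v : F, ⟪Lop u, v⟫ = ⟪u, Lop v⟫)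
    (M : F →ₗ[ℝ] E)
    (hLc : Lop Xc = 0) (hMc : M Xc = 0)
    (hLo : lam2 * ‖Xo‖ ^ 2 ≤ ⟪Xo, Lop Xo⟫)
    (hM : ∀ z : F, ‖M z‖ ≤ μ * ‖z‖) (hL : ∀ z : F, ‖Lop z‖ ≤ ν * ‖z‖)
    (hdd' : ‖d - d'‖ ≤ θ * ‖Xo‖) (hd's : ‖d' - ds‖ ≤ θ * ‖xt‖)
    (hmono : w * ‖xt‖ ^ 2 ≤ ⟪xt, d' - ds⟫) :
    (-k * ‖vt‖ ^ 2 - 2 * ⟪vt, d - ds⟫ - (2 * α / k) * ⟪vt, M (Xt + e)⟫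
        - k * ⟪xt, d - ds⟫ - α * ⟪Xt, Lop (Xt + e)⟫
      ≤ -(k * w - 2 * θ) * ‖xt‖ ^ 2 - (k - 2 * θ - 2 * α * μ / k) * ‖vt‖ ^ 2
        - (α * lam2 - θ - α * μ / k - α * ν / (2 * k) - k ^ 2 * θ / 4) * ‖Xo‖ ^ 2
        + (α * μ / k + α * k * ν / 2) * ‖e‖ ^ 2) ∧
    ((α * lam2 - θ) * k > α * μ + k ^ 3 * θ / 4 + α * ν / 2 →
      ‖e‖ ^ 2 ≤ ((α * lam2 - θ) * k - α * μ - k ^ 3 * θ / 4 - α * ν / 2) /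
          (α * μ + α * ν * k ^ 2 / 2) * ‖Xo‖ ^ 2 →
      -k * ‖vt‖ ^ 2 - 2 * ⟪vt, d - ds⟫ - (2 * α / k) * ⟪vt, M (Xt + e)⟫
          - k * ⟪xt, d - ds⟫ - α * ⟪Xt, Lop (Xt + e)⟫
        ≤ -(k * w - 2 * θ) * ‖xt‖ ^ 2 - (k - 2 * θ - 2 * α * μ / k) * ‖vt‖ ^ 2) := by
  set a := ‖xt‖ with ha
  set b := ‖vt‖ with hb
  set c := ‖Xo‖ with hc
  set ee := ‖e‖ with hee
  have ha0 : 0 ≤ a := norm_nonneg _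
  have hb0 : 0 ≤ b := norm_nonneg _
  have hc0 : 0 ≤ c := norm_nonneg _
  have he0 : 0 ≤ ee := norm_nonneg _
  -- bound on ⟪vt, d - ds⟫
  have hsplit : ⟪vt, d - ds⟫ = ⟪vt, d - d'⟫ + ⟪vt, d' - ds⟫ := by
    rw [show d - ds = (d - d') + (d' - ds) by abel, inner_add_right]
  have h1 : -(b * (θ * c)) + -(b * (θ * a)) ≤ ⟪vt, d - ds⟫ := by
    rw [hsplit]
    exact add_le_add (inner_ge_neg_bound vt _ _ hdd') (inner_ge_neg_bound vt _ _ hd's)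
  -- bound on ⟪vt, M (Xt + e)⟫
  have hMeq : M (Xt + e) = M (Xo + e) := by
    rw [hdecomp, add_assoc, map_add, hMc, zero_add]
  have h2 : -(b * (μ * (c + ee))) ≤ ⟪vt, M (Xt + e)⟫ := by
    rw [hMeq]
    refine inner_ge_neg_bound vt _ _ ?_
    calc ‖M (Xo + e)‖ ≤ μ * ‖Xo + e‖ := hM _
      _ ≤ μ * (c + ee) := by
        have := norm_add_le Xo e
        nlinarith
  -- bound on ⟪xt, d - ds⟫
  have hsplit2 : ⟪xt, d - ds⟫ = ⟪xt, d - d'⟫ + ⟪xt, d' - ds⟫ := by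
    rw [show d - ds = (d - d') + (d' - ds) by abel, inner_add_right]
  have h3 : -(a * (θ * c)) + w * a ^ 2 ≤ ⟪xt, d - ds⟫ := by
    rw [hsplit2]
    exact add_le_add (inner_ge_neg_bound xt _ _ hdd') hmono
  -- bound on ⟪Xt, Lop (Xt + e)⟫
  have hXcz : ∀ z : F, ⟪Xc, Lop z⟫ = 0 := fun z => by
    rw [← hLsym, hLc, inner_zero_left]
  have hLXt : Lop Xt = Lop Xo := by rw [hdecomp, map_add, hLc, zero_add]
  have hLeq : ⟪Xt, Lop (Xt + e)⟫ = ⟪Xo, Lop Xo⟫ + ⟪Xo, Lop e⟫ := by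
    rw [map_add, hLXt, hdecomp]
    simp [inner_add_left, inner_add_right, hXcz]
  have h4 : lam2 * c ^ 2 + -(c * (ν * ee)) ≤ ⟪Xt, Lop (Xt + e)⟫ := by
    rw [hLeq]
    exact add_le_add hLo (inner_ge_neg_bound Xo _ _ (hL e))
  have hcoef1 : (0:ℝ) < 2 * α / k := by positivity
  -- first inequality
  have main :
      -k * b ^ 2 - 2 * ⟪vt, d - ds⟫ - (2 * α / k) * ⟪vt, M (Xt + e)⟫
        - k * ⟪xt, d - ds⟫ - α * ⟪Xt, Lop (Xt + e)⟫
      ≤ -(k * w - 2 * θ) * a ^ 2 - (k - 2 * θ - 2 * α * μ / k) * b ^ 2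
        - (α * lam2 - θ - α * μ / k - α * ν / (2 * k) - k ^ 2 * θ / 4) * c ^ 2
        + (α * μ / k + α * k * ν / 2) * ee ^ 2 := by
    have step : -k * b ^ 2 - 2 * ⟪vt, d - ds⟫ - (2 * α / k) * ⟪vt, M (Xt + e)⟫
        - k * ⟪xt, d - ds⟫ - α * ⟪Xt, Lop (Xt + e)⟫
        ≤ -k * b ^ 2 - 2 * (-(b * (θ * c)) + -(b * (θ * a)))
          - (2 * α / k) * (-(b * (μ * (c + ee))))
          - k * (-(a * (θ * c)) + w * a ^ 2)
          - α * (lam2 * c ^ 2 + -(c * (ν * ee))) := by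
      have t1 := mul_le_mul_of_nonneg_left h1 (by norm_num : (0:ℝ) ≤ 2)
      have t2 := mul_le_mul_of_nonneg_left h2 (le_of_lt hcoef1)
      have t3 := mul_le_mul_of_nonneg_left h3 (le_of_lt hk)
      have t4 := mul_le_mul_of_nonneg_left h4 (le_of_lt hα)
      linarith
    refine step.trans ?_
    have hy1 : 0 ≤ θ * (b - a) ^ 2 := by positivity
    have hy2 : 0 ≤ θ * (b - c) ^ 2 := by positivity
    have hy3 : 0 ≤ (α * μ / k) * (b - c) ^ 2 := by positivity
    have hy4 : 0 ≤ (α * μ / k) * (b - ee) ^ 2 := by positivity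
    have hy5 : 0 ≤ θ * (a - k * c / 2) ^ 2 := by positivity
    have hy6 : 0 ≤ (α * ν / (2 * k)) * (c - k * ee) ^ 2 := by positivity
    have hkne : k ≠ 0 := ne_of_gt hk
    have key : (-(k * w - 2 * θ) * a ^ 2 - (k - 2 * θ - 2 * α * μ / k) * b ^ 2
        - (α * lam2 - θ - α * μ / k - α * ν / (2 * k) - k ^ 2 * θ / 4) * c ^ 2
        + (α * μ / k + α * k * ν / 2) * ee ^ 2)
        - (-k * b ^ 2 - 2 * (-(b * (θ * c)) + -(b * (θ * a)))
          - (2 * α / k) * (-(b * (μ * (c + ee))))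
          - k * (-(a * (θ * c)) + w * a ^ 2)
          - α * (lam2 * c ^ 2 + -(c * (ν * ee))))
        = θ * (b - a) ^ 2 + θ * (b - c) ^ 2 + (α * μ / k) * (b - c) ^ 2
          + (α * μ / k) * (b - ee) ^ 2 + θ * (a - k * c / 2) ^ 2
          + (α * ν / (2 * k)) * (c - k * ee) ^ 2 := by
      field_simp
      ring
    linarith
  refine ⟨main, fun hgt hebound => ?_⟩
  have hden : (0:ℝ) < α * μ + α * ν * k ^ 2 / 2 := by positivity
  have hkey : (α * μ / k + α * k * ν / 2) * ee ^ 2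
      ≤ (α * lam2 - θ - α * μ / k - α * ν / (2 * k) - k ^ 2 * θ / 4) * c ^ 2 := by
    have hcoef : (0:ℝ) ≤ α * μ / k + α * k * ν / 2 := by positivity
    have h := mul_le_mul_of_nonneg_left hebound hcoef
    calc (α * μ / k + α * k * ν / 2) * ee ^ 2
        ≤ (α * μ / k + α * k * ν / 2) *
          (((α * lam2 - θ) * k - α * μ - k ^ 3 * θ / 4 - α * ν / 2) /
            (α * μ + α * ν * k ^ 2 / 2) * c ^ 2) := h
      _ = (α * lam2 - θ - α * μ / k - α * ν / (2 * k) - k ^ 2 * θ / 4) * c ^ 2 := by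
          field_simp
          ring
  linarith [main]
end

section
/- Let a, b, ξ > 0, let φ(t) = (a + b)(e^{at} − 1)/(a + b(1 − e^{at})), and let τ = (1/a)·ln(1 + aξ/(a + b + bξ)). Then 0 < τ < (1/a)·ln(1 + a/b), φ(τ) = ξ, and φ(t) < ξ for all t ∈ [0, τ). -/
open Set

/-- the time `τ = (1/a)ln(1 + aξ/(a + b + bξ))` is the first time the
solution `φ` of the Riccati comparison equation reaches the threshold `ξ`. -/
theorem stmt10 (a b ξ : ℝ) (ha : 0 < a) (hb : 0 < b) (hξ : 0 < ξ)
    (φ : ℝ → ℝ)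
    (hφ : ∀ t : ℝ, φ t =
      (a + b) * (Real.exp (a * t) - 1) / (a + b * (1 - Real.exp (a * t))))
    (τ : ℝ) (hτ : τ = (1 / a) * Real.log (1 + a * ξ / (a + b + b * ξ))) :
    0 < τ ∧ τ < (1 / a) * Real.log (1 + a / b) ∧ φ τ = ξ ∧
      ∀ t ∈ Ico (0 : ℝ) τ, φ t < ξ := by
  have hD : 0 < a + b + b * ξ := by positivity
  have hD' : a + b + b * ξ ≠ 0 := ne_of_gt hD
  have harg : (1:ℝ) < 1 + a * ξ / (a + b + b * ξ) := by
    have : 0 < a * ξ / (a + b + b * ξ) := by positivity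
    linarith
  have hlog : 0 < Real.log (1 + a * ξ / (a + b + b * ξ)) := Real.log_pos harg
  have hτpos : 0 < τ := by rw [hτ]; positivity
  have haτ : a * τ = Real.log (1 + a * ξ / (a + b + b * ξ)) := by
    rw [hτ]; field_simp
  have hE : Real.exp (a * τ) = 1 + a * ξ / (a + b + b * ξ) := by
    rw [haτ, Real.exp_log (by linarith)]
  have hED : Real.exp (a * τ) * (a + b + b * ξ) = (a + b + b * ξ) + a * ξ := by
    rw [hE]; field_simp
  refine ⟨hτpos, ?_, ?_, ?_⟩
  · rw [hτ]
    apply mul_lt_mul_of_pos_left _ (by positivity : (0:ℝ) < 1/a)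
    apply Real.log_lt_log (by linarith)
    have h1 : a * ξ / (a + b + b * ξ) < a / b := by
      rw [div_lt_div_iff₀ hD hb]
      nlinarith
    linarith
  · have hden : a + b * (1 - Real.exp (a * τ)) = a * (a + b) / (a + b + b * ξ) := by
      rw [hE]; field_simp; ring
    have hdenne : a + b * (1 - Real.exp (a * τ)) ≠ 0 := by
      rw [hden]; positivity
    rw [hφ, div_eq_iff hdenne, hden, hE]
    field_simp
    ring
  · rintro t ⟨ht0, htτ⟩
    have heE : Real.exp (a * t) < Real.exp (a * τ) :=
      Real.exp_lt_exp.mpr (by nlinarith)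
    have he1 : 1 ≤ Real.exp (a * t) :=
      Real.one_le_exp (by positivity)
    have heD : Real.exp (a * t) * (a + b + b * ξ) < (a + b + b * ξ) + a * ξ := by
      calc Real.exp (a * t) * (a + b + b * ξ) < Real.exp (a * τ) * (a + b + b * ξ) := by
            exact mul_lt_mul_of_pos_right heE hD
        _ = (a + b + b * ξ) + a * ξ := hED
    have hdenpos : 0 < a + b * (1 - Real.exp (a * t)) := by nlinarith
    rw [hφ, div_lt_iff₀ hdenpos]
    nlinarith
end

section
/- Let a, b, ξ > 0 and τ = (1/a)·ln(1 + aξ/(a + b + bξ)). Suppose q : [t₀, t₁] → ℝ is differentiable with q(t₀) = 0, q(t) ≥ 0 for all t ∈ [t₀, t₁], and q'(t) ≤ a(1 + q(t)) + b(1 + q(t))² for all t ∈ [t₀, t₁]. If t₁ − t₀ < τ, then q(t) < ξ for all t ∈ [t₀, t₁]. -/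
open Set

/-- the comparison-lemma step. If `q(t₀) = 0`, `q ≥ 0` and
`q' ≤ a(1 + q) + b(1 + q)²` on `[t₀, t₁]`, and `t₁ - t₀ < τ`, then `q < ξ` on `[t₀, t₁]`. -/
theorem stmt11 (a b ξ : ℝ) (ha : 0 < a) (hb : 0 < b) (hξ : 0 < ξ)
    (τ : ℝ) (hτ : τ = (1 / a) * Real.log (1 + a * ξ / (a + b + b * ξ)))
    (t₀ t₁ : ℝ) (h01 : t₀ ≤ t₁) (q q' : ℝ → ℝ)
    (hderiv : ∀ t ∈ Icc t₀ t₁, HasDerivAt q (q' t) t)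
    (hq0 : q t₀ = 0) (hqnn : ∀ t ∈ Icc t₀ t₁, 0 ≤ q t)
    (hq' : ∀ t ∈ Icc t₀ t₁, q' t ≤ a * (1 + q t) + b * (1 + q t) ^ 2)
    (hlt : t₁ - t₀ < τ) :
    ∀ t ∈ Icc t₀ t₁, q t < ξ := by
  have hD : 0 < a + b + b * ξ := by positivity
  have h1q : ∀ t ∈ Icc t₀ t₁, 0 < 1 + q t := fun t ht => by linarith [hqnn t ht]
  -- the auxiliary function
  set f : ℝ → ℝ := fun t => Real.exp (a * (t - t₀)) * ((1 + q t)⁻¹ + b / a) with hf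
  -- derivative of f on Icc
  have hfderiv : ∀ t ∈ Icc t₀ t₁, HasDerivAt f
      (a * Real.exp (a * (t - t₀)) * ((1 + q t)⁻¹ + b / a) +
        Real.exp (a * (t - t₀)) * (-(q' t) / (1 + q t) ^ 2)) t := by
    intro t ht
    have hE : HasDerivAt (fun s => Real.exp (a * (s - t₀))) (a * Real.exp (a * (t - t₀))) t := by
      have h1 : HasDerivAt (fun s : ℝ => a * (s - t₀)) a t := by
        simpa using ((hasDerivAt_id t).sub_const t₀).const_mul a
      simpa [mul_comm] using h1.exp
    have hv : HasDerivAt (fun s => (1 + q s)⁻¹ + b / a) (-(q' t) / (1 + q t) ^ 2) t := by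
      have := (((hderiv t ht).const_add 1).inv (ne_of_gt (h1q t ht)))
      simpa using this.add_const (b / a)
    exact hE.mul hv
  -- derivative is nonnegative on Icc
  have hfnn : ∀ t ∈ Icc t₀ t₁,
      0 ≤ a * Real.exp (a * (t - t₀)) * ((1 + q t)⁻¹ + b / a) +
        Real.exp (a * (t - t₀)) * (-(q' t) / (1 + q t) ^ 2) := by
    intro t ht
    have hp := h1q t ht
    have hEpos : 0 < Real.exp (a * (t - t₀)) := Real.exp_pos _
    have hdiv : q' t / (1 + q t) ^ 2 ≤ a / (1 + q t) + b := by
      rw [div_le_iff₀ (by positivity)]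
      have : (a / (1 + q t) + b) * (1 + q t) ^ 2 = a * (1 + q t) + b * (1 + q t) ^ 2 := by
        field_simp
      rw [this]; exact hq' t ht
    have h1 : a * ((1 + q t)⁻¹ + b / a) = a / (1 + q t) + b := by
      field_simp
    have : -(q' t) / (1 + q t) ^ 2 ≥ -(a * ((1 + q t)⁻¹ + b / a)) := by
      rw [h1, neg_div]
      linarith [hdiv]
    nlinarith [mul_le_mul_of_nonneg_left this.le hEpos.le]
  -- f is monotone on Icc
  have hmono : MonotoneOn f (Icc t₀ t₁) := by
    apply monotoneOn_of_deriv_nonneg (convex_Icc t₀ t₁)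
    · exact fun t ht => ((hfderiv t ht).continuousAt).continuousWithinAt
    · intro t ht
      exact ((hfderiv t (Ioo_subset_Icc_self (by simpa using ht))).differentiableAt).differentiableWithinAt
    · intro t ht
      have ht' : t ∈ Icc t₀ t₁ := Ioo_subset_Icc_self (by simpa using ht)
      rw [(hfderiv t ht').deriv]
      exact hfnn t ht'
  -- conclude
  intro t ht
  have hkey : f t₀ ≤ f t := hmono (left_mem_Icc.mpr h01) ht ht.1
  have hf0 : f t₀ = 1 + b / a := by simp [hf, hq0]
  set E := Real.exp (a * (t - t₀)) with hE
  have hEpos : 0 < E := Real.exp_pos _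
  have hElt : E * (a + b + b * ξ) < (a + b) * (1 + ξ) := by
    have harg : (0:ℝ) < 1 + a * ξ / (a + b + b * ξ) := by positivity
    have hexp : Real.exp (a * τ) = 1 + a * ξ / (a + b + b * ξ) := by
      rw [hτ]
      rw [show a * (1 / a * Real.log (1 + a * ξ / (a + b + b * ξ)))
        = Real.log (1 + a * ξ / (a + b + b * ξ)) by field_simp]
      exact Real.exp_log harg
    have h1 : a * (t - t₀) < a * τ := by
      have : t - t₀ < τ := by
        have := ht.2; linarith
      exact mul_lt_mul_of_pos_left this ha
    have h2 : E < 1 + a * ξ / (a + b + b * ξ) := by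
      rw [hE, ← hexp]
      exact Real.exp_lt_exp.mpr h1
    have h3 : E * (a + b + b * ξ) < (1 + a * ξ / (a + b + b * ξ)) * (a + b + b * ξ) :=
      mul_lt_mul_of_pos_right h2 hD
    have h4 : (1 + a * ξ / (a + b + b * ξ)) * (a + b + b * ξ) = (a + b) * (1 + ξ) := by
      field_simp; ring
    linarith [h3, h4 ▸ h3]
  -- from monotonicity: 1 + b/a ≤ E * ((1+q t)⁻¹ + b/a)
  have hp := h1q t ht
  have hkey' : a + b ≤ a * E * (1 + q t)⁻¹ + b * E := by
    have := hkey
    rw [hf0] at this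
    have h2 : a * (1 + b / a) ≤ a * (E * ((1 + q t)⁻¹ + b / a)) :=
      mul_le_mul_of_nonneg_left this ha.le
    have e1 : a * (1 + b / a) = a + b := by field_simp
    have e2 : a * (E * ((1 + q t)⁻¹ + b / a)) = a * E * (1 + q t)⁻¹ + b * E := by
      field_simp
    linarith [e1 ▸ e2 ▸ h2]
  -- finish with arithmetic
  by_contra hcon
  push_neg at hcon
  have hu : (1 + q t)⁻¹ * (1 + q t) = 1 := inv_mul_cancel₀ (ne_of_gt hp)
  have hupos : 0 < (1 + q t)⁻¹ := inv_pos.mpr hp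
  -- b*E < a + b
  have hbE : b * E < a + b := by nlinarith
  -- a*E*(1+q)⁻¹ ≥ a+b-b*E, multiply by (1+q):
  have h5 : (a + b - b * E) * (1 + q t) ≤ a * E := by
    have := mul_le_mul_of_nonneg_right (by linarith [hkey'] : a + b - b * E ≤ a * E * (1 + q t)⁻¹) hp.le
    calc (a + b - b * E) * (1 + q t) ≤ a * E * (1 + q t)⁻¹ * (1 + q t) := this
      _ = a * E := by rw [mul_assoc, hu, mul_one]
  have h6 : (a + b - b * E) * (1 + ξ) ≤ (a + b - b * E) * (1 + q t) :=
    mul_le_mul_of_nonneg_left (by linarith) (by linarith)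
  nlinarith [hElt, h5, h6]
end
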